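/- arXiv:2109.01970 — 5 statements merged into one kernel-verified Lean document; each statement's English description precedes it below -/
import Mathlib

section
/- Let {S(t)}_{t≥0} be a dissipative semigroup on a Banach space (X, ‖·‖) with positively invariant bounded absorbing set 𝓑₀, and let φ: ℝ⁺ → ℝ⁺ satisfy φ(t) → 0 as t → ∞. Suppose there exists t₀ > 0 such that for every ε > 0 there exist a finite-dimensional subspace X₁ ⊆ X and a bounded linear projection P: X → X₁ with sup_{x ∈ 𝓑₀} ‖(I − P)S(t)x‖ ≤ φ(t) + ε for all t ≥ t₀. Then α(S(t)𝓑₀) ≤ 2φ(t) for all t ≥ t₀. -/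
open Set Metric Filter

lemma totallyBounded_of_bounded_subset_fd {X : Type*} [NormedAddCommGroup X] [NormedSpace ℝ X]
    (X₁ : Submodule ℝ X) [FiniteDimensional ℝ X₁] (A : Set X)
    (hA : Bornology.IsBounded A) (hsub : A ⊆ (X₁ : Set X)) : TotallyBounded A := by
  have h1 : Bornology.IsBounded ((↑) ⁻¹' A : Set X₁) := by
    rw [Metric.isBounded_iff] at hA ⊢
    obtain ⟨C, hC⟩ := hA
    exact ⟨C, fun x hx y hy => hC hx hy⟩
  have h2 : TotallyBounded ((↑) ⁻¹' A : Set X₁) :=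
    (h1.isCompact_closure.totallyBounded).subset subset_closure
  have h3 := h2.image (uniformContinuous_subtype_val)
  rwa [Set.image_preimage_eq_of_subset (by rwa [Subtype.range_coe])] at h3

noncomputable def kuratowski {X : Type*} [MetricSpace X] (A : Set X) : ℝ :=
  sInf {δ : ℝ | 0 < δ ∧ ∃ 𝓒 : Finset (Set X), (A ⊆ ⋃ s ∈ 𝓒, s) ∧ ∀ s ∈ 𝓒, Metric.diam s < δ}

theorem stmt_7 {X : Type*} [NormedAddCommGroup X] [NormedSpace ℝ X] [CompleteSpace X]
    (S : ℝ → X → X)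
    (hcont : ∀ t, 0 ≤ t → Continuous (S t))
    (hS0 : ∀ x, S 0 x = x)
    (hSadd : ∀ s t : ℝ, 0 ≤ s → 0 ≤ t → ∀ x, S (s + t) x = S s (S t x))
    (𝓑₀ : Set X) (hBbdd : Bornology.IsBounded 𝓑₀)
    (hBinv : ∀ t : ℝ, 0 ≤ t → S t '' 𝓑₀ ⊆ 𝓑₀)
    (habs : ∀ B : Set X, Bornology.IsBounded B → ∃ tB : ℝ, 0 ≤ tB ∧
      ∀ t : ℝ, tB ≤ t → S t '' B ⊆ 𝓑₀)
    (φ : ℝ → ℝ) (hφpos : ∀ t : ℝ, 0 ≤ φ t) (hφ0 : Tendsto φ atTop (nhds 0))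
    (t₀ : ℝ) (ht₀ : 0 < t₀)
    (hproj : ∀ ε : ℝ, 0 < ε → ∃ (X₁ : Submodule ℝ X) (P : X →L[ℝ] X),
      FiniteDimensional ℝ X₁ ∧ (∀ x : X, P x ∈ X₁) ∧ (∀ x ∈ X₁, P x = x) ∧
      ∀ x ∈ 𝓑₀, ∀ t : ℝ, t₀ ≤ t → ‖S t x - P (S t x)‖ ≤ φ t + ε) :
    ∀ t : ℝ, t₀ ≤ t → kuratowski (S t '' 𝓑₀) ≤ 2 * φ t := by
  intro t ht
  have ht0 : 0 ≤ t := le_trans ht₀.le ht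
  have hsub : S t '' 𝓑₀ ⊆ 𝓑₀ := hBinv t ht0
  have hbddS : Bornology.IsBounded (S t '' 𝓑₀) := hBbdd.subset hsub
  refine le_of_forall_pos_le_add ?_
  intro ε hε
  obtain ⟨X₁, P, hfd, hmem, hid, hP⟩ := hproj (ε/8) (by positivity)
  haveI := hfd
  set A : Set X := P '' (S t '' 𝓑₀) with hAdef
  have hAX₁ : A ⊆ (X₁ : Set X) := by rintro _ ⟨z, _, rfl⟩; exact hmem z
  have hAb : Bornology.IsBounded A := by
    obtain ⟨C, hC⟩ := hbddS.exists_norm_le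
    have : ∀ y ∈ A, ‖y‖ ≤ ‖P‖ * C := by
      rintro _ ⟨z, hz, rfl⟩
      calc ‖P z‖ ≤ ‖P‖ * ‖z‖ := P.le_opNorm z
        _ ≤ ‖P‖ * C := by
            have := hC z hz
            nlinarith [norm_nonneg (P : X →L[ℝ] X), P.opNorm_nonneg]
    exact isBounded_iff_forall_norm_le.mpr ⟨‖P‖ * C, this⟩
  have htb : TotallyBounded A := totallyBounded_of_bounded_subset_fd X₁ A hAb hAX₁
  obtain ⟨F, hFfin, hFcov⟩ := (Metric.totallyBounded_iff.mp htb) (ε/8) (by positivity)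
  set R : ℝ := φ t + ε/8 + ε/8 with hRdef
  have hRpos : 0 < R := by have := hφpos t; positivity
  set 𝓒 : Finset (Set X) := (open Classical in hFfin.toFinset.image (fun y => Metric.ball y R)) with h𝓒
  have hcov : S t '' 𝓑₀ ⊆ ⋃ s ∈ 𝓒, s := by
    rintro _ ⟨x, hx, rfl⟩
    have hPz : P (S t x) ∈ A := ⟨S t x, ⟨x, hx, rfl⟩, rfl⟩
    obtain ⟨y, hy, hyball⟩ := Set.mem_iUnion₂.mp (hFcov hPz)
    have hb : S t x ∈ Metric.ball y R := by
      have h1 : ‖S t x - P (S t x)‖ ≤ φ t + ε/8 := hP x hx t ht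
      have h2 : ‖P (S t x) - y‖ < ε/8 := by
        rw [Metric.mem_ball, dist_eq_norm] at hyball; exact hyball
      rw [Metric.mem_ball, dist_eq_norm]
      calc ‖S t x - y‖ ≤ ‖S t x - P (S t x)‖ + ‖P (S t x) - y‖ := norm_sub_le_norm_sub_add_norm_sub _ _ _
        _ < R := by rw [hRdef]; linarith
    refine Set.mem_iUnion₂.mpr ⟨Metric.ball y R, ?_, hb⟩
    simp only [h𝓒, Finset.mem_image, Set.Finite.mem_toFinset]
    exact ⟨y, hy, rfl⟩
  have hdiam : ∀ s ∈ 𝓒, Metric.diam s < 2 * φ t + ε := by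
    intro s hs
    simp only [h𝓒, Finset.mem_image, Set.Finite.mem_toFinset] at hs
    obtain ⟨y, _, rfl⟩ := hs
    calc Metric.diam (Metric.ball y R) ≤ 2 * R := Metric.diam_ball hRpos.le
      _ < 2 * φ t + ε := by rw [hRdef]; linarith
  have hmemset : (2 * φ t + ε) ∈ {δ : ℝ | 0 < δ ∧ ∃ 𝓒 : Finset (Set X),
      (S t '' 𝓑₀ ⊆ ⋃ s ∈ 𝓒, s) ∧ ∀ s ∈ 𝓒, Metric.diam s < δ} := by
    refine ⟨by have := hφpos t; positivity, 𝓒, hcov, hdiam⟩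
  exact csInf_le ⟨0, fun δ hδ => hδ.1.le⟩ hmemset
end

section
/- Let {S(t)}_{t≥0} be a dissipative semigroup on a complete metric space (X,d) with positively invariant bounded absorbing set 𝓑₀. Assume there exist T > 0, δ₀ > 0, η ∈ [0,1), a function g: (ℝ⁺)^m → ℝ⁺ nondecreasing in each variable with g(0,…,0) = 0 and continuous at (0,…,0), and pseudometrics ϱ₁,…,ϱ_m on 𝓑₀, each precompact on 𝓑₀ (every sequence in 𝓑₀ has a subsequence Cauchy with respect to ϱᵢ), such that d(S(T)y₁, S(T)y₂) ≤ η d(y₁,y₂) + g(ϱ₁(y₁,y₂),…,ϱ_m(y₁,y₂)) holds whenever y₁, y₂ ∈ 𝓑₀ satisfy ϱᵢ(y₁,y₂) ≤ δ₀ for all i. Then α(S(t)𝓑₀) ≤ η^{t/T − 1} α(𝓑₀) for all t ≥ T; in particular the system is exponentially decaying with respect to the noncompactness measure. -/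
open Set Metric Filter

def kurSet {X : Type*} [MetricSpace X] (A : Set X) : Set ℝ :=
  {δ : ℝ | 0 < δ ∧ ∃ 𝓒 : Finset (Set X), (A ⊆ ⋃ s ∈ 𝓒, s) ∧ ∀ s ∈ 𝓒, Metric.diam s < δ}

lemma kuratowski_def {X : Type*} [MetricSpace X] (A : Set X) :
    kuratowski A = sInf (kurSet A) := rfl

lemma kurSet_bddBelow {X : Type*} [MetricSpace X] (A : Set X) :
    BddBelow (kurSet A) := ⟨0, fun _ hδ => hδ.1.le⟩

lemma kuratowski_nonneg {X : Type*} [MetricSpace X] (A : Set X) :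
    0 ≤ kuratowski A :=
  Real.sInf_nonneg (fun _ hδ => hδ.1.le)

lemma kurSet_nonempty {X : Type*} [MetricSpace X]
    (hX : Bornology.IsBounded (Set.univ : Set X)) (A : Set X) :
    (kurSet A).Nonempty := by
  classical
  refine ⟨Metric.diam (Set.univ : Set X) + 1, by positivity, {Set.univ}, ?_, ?_⟩
  · simp
  · intro s hs
    simp only [Finset.mem_singleton] at hs
    subst hs
    linarith [Metric.diam_nonneg (s := (Set.univ : Set X))]

lemma kuratowski_mono {X : Type*} [MetricSpace X]
    (hX : Bornology.IsBounded (Set.univ : Set X)) {A B : Set X} (h : A ⊆ B) :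
    kuratowski A ≤ kuratowski B := by
  rw [kuratowski_def, kuratowski_def]
  refine csInf_le_csInf (kurSet_bddBelow A) (kurSet_nonempty hX B) ?_
  rintro δ ⟨hδ, 𝓒, hcov, hdiam⟩
  exact ⟨hδ, 𝓒, h.trans hcov, hdiam⟩

lemma kuratowski_eq_zero_of_unbounded {X : Type*} [MetricSpace X]
    (hX : ¬ Bornology.IsBounded (Set.univ : Set X)) (A : Set X) :
    kuratowski A = 0 := by
  classical
  refine le_antisymm ?_ (kuratowski_nonneg A)
  have h : ∀ ε : ℝ, 0 < ε → kuratowski A ≤ ε := by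
    intro ε hε
    rw [kuratowski_def]
    refine csInf_le (kurSet_bddBelow A) ⟨hε, {Set.univ}, by simp, ?_⟩
    intro s hs
    simp only [Finset.mem_singleton] at hs
    subst hs
    rw [Metric.diam_eq_zero_of_unbounded hX]
    exact hε
  have := le_of_forall_pos_le_add (fun ε hε => by linarith [h ε hε] : ∀ ε : ℝ, 0 < ε → kuratowski A ≤ 0 + ε)
  linarith

lemma net_exists {X : Type*} (𝓑₀ : Set X) (ρ : X → X → ℝ)
    (hsymm : ∀ x y, ρ x y = ρ y x)
    (hpre : ∀ y : ℕ → X, (∀ n, y n ∈ 𝓑₀) →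
      ∃ k : ℕ → ℕ, StrictMono k ∧
        ∀ ε : ℝ, 0 < ε → ∃ N : ℕ, ∀ p q : ℕ, N ≤ p → N ≤ q → ρ (y (k p)) (y (k q)) ≤ ε)
    {ε : ℝ} (hε : 0 < ε) :
    ∃ s : Finset X, ∀ y ∈ 𝓑₀, ∃ c ∈ s, ρ y c ≤ ε := by
  classical
  by_contra h
  push_neg at h
  choose pick hpick₁ hpick₂ using h
  let A : ℕ → Finset X := fun n => Nat.rec ∅ (fun _ s => insert (pick s) s) n
  have hA : ∀ n, A (n + 1) = insert (pick (A n)) (A n) := fun n => rfl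
  set y : ℕ → X := fun n => pick (A n) with hy
  have hmem : ∀ p q : ℕ, p < q → y p ∈ A q := by
    intro p q hpq
    induction q with
    | zero => omega
    | succ q ih =>
      rw [hA, Finset.mem_insert]
      rcases Nat.lt_succ_iff_lt_or_eq.mp hpq with h' | h'
      · exact Or.inr (ih h')
      · subst h'; exact Or.inl rfl
  obtain ⟨k, hk, hcauchy⟩ := hpre y (fun n => hpick₁ (A n))
  obtain ⟨N, hN⟩ := hcauchy ε hε
  have h1 : ρ (y (k N)) (y (k (N + 1))) ≤ ε := hN N (N + 1) le_rfl (by omega)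
  have h2 : ε < ρ (y (k (N + 1))) (y (k N)) :=
    hpick₂ (A (k (N + 1))) (y (k N)) (hmem _ _ (hk (by omega)))
  rw [hsymm] at h2
  linarith

theorem stmt_9 {X : Type*} [MetricSpace X] [CompleteSpace X] {m : ℕ}
    (S : ℝ → X → X)
    (hcont : ∀ t, 0 ≤ t → Continuous (S t))
    (hS0 : ∀ x, S 0 x = x)
    (hSadd : ∀ s t : ℝ, 0 ≤ s → 0 ≤ t → ∀ x, S (s + t) x = S s (S t x))
    (𝓑₀ : Set X) (hBbdd : Bornology.IsBounded 𝓑₀)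
    (hBinv : ∀ t : ℝ, 0 ≤ t → S t '' 𝓑₀ ⊆ 𝓑₀)
    (habs : ∀ B : Set X, Bornology.IsBounded B → ∃ tB : ℝ, 0 ≤ tB ∧
      ∀ t : ℝ, tB ≤ t → S t '' B ⊆ 𝓑₀)
    (T : ℝ) (hT : 0 < T) (δ₀ : ℝ) (hδ₀ : 0 < δ₀)
    (η : ℝ) (hη : 0 ≤ η) (hη1 : η < 1)
    (g : (Fin m → ℝ) → ℝ) (hgpos : ∀ v, 0 ≤ g v)
    (hgmono : ∀ v w : Fin m → ℝ, (∀ i, v i ≤ w i) → g v ≤ g w)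
    (hg0 : g 0 = 0) (hgcont : ContinuousAt g 0)
    (ϱ : Fin m → X → X → ℝ)
    (hϱpos : ∀ i x y, 0 ≤ ϱ i x y)
    (hϱsymm : ∀ i x y, ϱ i x y = ϱ i y x)
    (hϱdiag : ∀ i x, ϱ i x x = 0)
    (hϱtri : ∀ i x y z, ϱ i x z ≤ ϱ i x y + ϱ i y z)
    (hϱpre : ∀ i, ∀ y : ℕ → X, (∀ n, y n ∈ 𝓑₀) →
      ∃ k : ℕ → ℕ, StrictMono k ∧
        ∀ ε : ℝ, 0 < ε → ∃ N : ℕ, ∀ p q : ℕ, N ≤ p → N ≤ q → ϱ i (y (k p)) (y (k q)) ≤ ε)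
    (hquasi : ∀ y₁ ∈ 𝓑₀, ∀ y₂ ∈ 𝓑₀, (∀ i, ϱ i y₁ y₂ ≤ δ₀) →
      dist (S T y₁) (S T y₂) ≤ η * dist y₁ y₂ + g (fun i => ϱ i y₁ y₂)) :
    ∀ t : ℝ, T ≤ t → kuratowski (S t '' 𝓑₀) ≤ η ^ (t / T - 1) * kuratowski 𝓑₀ := by
  classical
  intro t ht
  have hrpow_nonneg : 0 ≤ η ^ (t / T - 1) := Real.rpow_nonneg hη _
  by_cases hX : Bornology.IsBounded (Set.univ : Set X)
  swap
  · rw [kuratowski_eq_zero_of_unbounded hX]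
    exact mul_nonneg hrpow_nonneg (kuratowski_nonneg _)
  -- Key contraction lemma
  have key : ∀ B : Set X, B ⊆ 𝓑₀ → kuratowski (S T '' B) ≤ η * kuratowski B := by
    intro B hB
    refine le_of_forall_pos_le_add ?_
    intro e he
    -- choose a near-optimal cover of B
    obtain ⟨δ, hδmem, hδlt⟩ := Real.lt_sInf_add_pos (kurSet_nonempty hX B)
      (show (0:ℝ) < e / (2 * (η + 1)) by positivity)
    obtain ⟨hδpos, 𝓒, hcover, hdiam⟩ := hδmem
    -- continuity of g at 0
    obtain ⟨ε₁, hε₁, hgball⟩ := Metric.continuousAt_iff.mp hgcont (e / 2) (by positivity)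
    set ε : ℝ := min (δ₀ / 2) (ε₁ / 4) with hεdef
    have hεpos : 0 < ε := lt_min (by positivity) (by positivity)
    have hεδ₀ : 2 * ε ≤ δ₀ := by
      have := min_le_left (δ₀ / 2) (ε₁ / 4); rw [← hεdef] at this; linarith
    have hgsmall : g (fun _ => 2 * ε) < e / 2 := by
      have hd : dist (fun _ : Fin m => 2 * ε) (0 : Fin m → ℝ) < ε₁ := by
        rw [dist_pi_lt_iff hε₁]
        intro i
        have := min_le_right (δ₀ / 2) (ε₁ / 4); rw [← hεdef] at this
        simp only [Pi.zero_apply, Real.dist_eq, sub_zero]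
        rw [abs_of_nonneg (by linarith)]
        linarith
      have := hgball hd
      rw [hg0, Real.dist_eq, sub_zero] at this
      calc g (fun _ => 2 * ε) ≤ |g (fun _ => 2 * ε)| := le_abs_self _
        _ < e / 2 := this
    -- finite nets for each pseudometric
    have hnet : ∀ i : Fin m, ∃ s : Finset X, ∀ y ∈ 𝓑₀, ∃ c ∈ s, ϱ i y c ≤ ε :=
      fun i => net_exists 𝓑₀ (ϱ i) (hϱsymm i) (hϱpre i) hεpos
    choose net hnetp using hnet
    -- cells
    let cell : ((i : Fin m) → {c // c ∈ net i}) → Set X :=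
      fun f => {y | ∀ i, ϱ i y (f i).1 ≤ ε}
    have hcell : ∀ y ∈ 𝓑₀, ∃ f, y ∈ cell f := by
      intro y hy
      choose c hc₁ hc₂ using fun i => hnetp i y hy
      exact ⟨fun i => ⟨c i, hc₁ i⟩, fun i => hc₂ i⟩
    have hcellρ : ∀ f, ∀ y₁ ∈ cell f, ∀ y₂ ∈ cell f, ∀ i, ϱ i y₁ y₂ ≤ 2 * ε := by
      intro f y₁ h₁ y₂ h₂ i
      have := hϱtri i y₁ (f i).1 y₂
      have h₂' : ϱ i (f i).1 y₂ ≤ ε := by rw [hϱsymm]; exact h₂ i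
      have h₁' := h₁ i
      linarith
    -- the new cover of S T '' B
    let 𝓓 : Finset (Set X) :=
      (𝓒 ×ˢ (Finset.univ : Finset ((i : Fin m) → {c // c ∈ net i}))).image
        (fun p => S T '' (B ∩ p.1 ∩ cell p.2))
    have hkur : kuratowski (S T '' B) ≤ η * δ + e / 2 := by
      rw [kuratowski_def]
      refine csInf_le (kurSet_bddBelow _) ⟨by positivity, 𝓓, ?_, ?_⟩
      · rintro x ⟨y, hyB, rfl⟩
        have hy𝓑 : y ∈ 𝓑₀ := hB hyB
        obtain ⟨f, hf⟩ := hcell y hy𝓑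
        have := hcover hyB
        simp only [mem_iUnion, exists_prop] at this
        obtain ⟨s, hs𝓒, hys⟩ := this
        simp only [mem_iUnion, exists_prop]
        refine ⟨S T '' (B ∩ s ∩ cell f), ?_, ⟨y, ⟨⟨hyB, hys⟩, hf⟩, rfl⟩⟩
        exact Finset.mem_image.mpr ⟨(s, f), Finset.mem_product.mpr ⟨hs𝓒, Finset.mem_univ _⟩, rfl⟩
      · intro u hu
        obtain ⟨⟨s, f⟩, hp, rfl⟩ := Finset.mem_image.mp hu
        have hs𝓒 : s ∈ 𝓒 := (Finset.mem_product.mp hp).1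
        have hsbdd : Bornology.IsBounded s := hX.subset (subset_univ s)
        have hbound : Metric.diam (S T '' (B ∩ s ∩ cell f)) ≤ η * δ + g (fun _ => 2 * ε) := by
          refine Metric.diam_le_of_forall_dist_le
            (by have := hgpos (fun _ => 2 * ε); positivity) ?_
          rintro u ⟨y₁, hy₁, rfl⟩ v ⟨y₂, hy₂, rfl⟩
          obtain ⟨⟨hy₁B, hy₁s⟩, hy₁c⟩ := hy₁
          obtain ⟨⟨hy₂B, hy₂s⟩, hy₂c⟩ := hy₂
          have hρ : ∀ i, ϱ i y₁ y₂ ≤ 2 * ε := hcellρ f y₁ hy₁c y₂ hy₂c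
          have hq := hquasi y₁ (hB hy₁B) y₂ (hB hy₂B) (fun i => (hρ i).trans hεδ₀)
          have hd12 : dist y₁ y₂ ≤ δ :=
            (Metric.dist_le_diam_of_mem hsbdd hy₁s hy₂s).trans (hdiam s hs𝓒).le
          have hgm : g (fun i => ϱ i y₁ y₂) ≤ g (fun _ => 2 * ε) := hgmono _ _ hρ
          have : η * dist y₁ y₂ ≤ η * δ := mul_le_mul_of_nonneg_left hd12 hη
          linarith
        exact hbound.trans_lt (by linarith)
    have hδkB : δ < kuratowski B + e / (2 * (η + 1)) := by
      rw [kuratowski_def]; exact hδlt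
    have h4 : η * (e / (2 * (η + 1))) ≤ e / 2 := by
      calc η * (e / (2 * (η + 1)))
          ≤ (η + 1) * (e / (2 * (η + 1))) :=
            mul_le_mul_of_nonneg_right (by linarith) (by positivity)
        _ = e / 2 := by field_simp
    linarith [h4, hkur, mul_le_mul_of_nonneg_left hδkB.le hη]
  -- iterate
  have iter : ∀ n : ℕ, ∀ r : ℝ, 0 ≤ r →
      kuratowski (S ((n : ℝ) * T + r) '' 𝓑₀) ≤ η ^ n * kuratowski 𝓑₀ := by
    intro n
    induction n with
    | zero =>
      intro r hr
      simp only [Nat.cast_zero, zero_mul, zero_add, pow_zero, one_mul]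
      exact kuratowski_mono hX (hBinv r hr)
    | succ n ih =>
      intro r hr
      have hnr : 0 ≤ (n : ℝ) * T + r := by positivity
      have heq : S (((n : ℕ) + 1 : ℕ) * T + r) '' 𝓑₀
          = S T '' (S ((n : ℝ) * T + r) '' 𝓑₀) := by
        rw [Set.image_image]
        apply Set.image_congr
        intro x _
        rw [show (((n : ℕ) + 1 : ℕ) : ℝ) * T + r = T + ((n : ℝ) * T + r) by push_cast; ring]
        exact hSadd T ((n : ℝ) * T + r) hT.le hnr x
      rw [heq]
      calc kuratowski (S T '' (S ((n : ℝ) * T + r) '' 𝓑₀))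
          ≤ η * kuratowski (S ((n : ℝ) * T + r) '' 𝓑₀) := key _ (hBinv _ hnr)
        _ ≤ η * (η ^ n * kuratowski 𝓑₀) := mul_le_mul_of_nonneg_left (ih r hr) hη
        _ = η ^ (n + 1) * kuratowski 𝓑₀ := by ring
  -- put things together
  set n : ℕ := ⌊t / T⌋₊ with hn
  have htT : (1 : ℝ) ≤ t / T := (one_le_div hT).mpr ht
  have hn1 : 1 ≤ n := Nat.le_floor (by exact_mod_cast htT)
  have hfl : (n : ℝ) ≤ t / T := Nat.floor_le (by linarith)
  have hfl' : t / T < (n : ℝ) + 1 := Nat.lt_floor_add_one _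
  have hr : 0 ≤ t - (n : ℝ) * T := by
    have : (n : ℝ) * T ≤ t := by
      rw [← le_div_iff₀ hT] at *
      linarith [hfl]
    linarith
  have hteq : t = (n : ℝ) * T + (t - (n : ℝ) * T) := by ring
  have hmain : kuratowski (S t '' 𝓑₀) ≤ η ^ n * kuratowski 𝓑₀ := by
    rw [hteq]; exact iter n _ hr
  rcases eq_or_lt_of_le hη with hη0 | hη0
  · -- η = 0
    have hn0 : η ^ n = 0 := by rw [← hη0, zero_pow (by omega)]
    rw [hn0, zero_mul] at hmain
    exact hmain.trans (mul_nonneg hrpow_nonneg (kuratowski_nonneg _))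
  · -- 0 < η
    have hexp : t / T - 1 ≤ (n : ℝ) := by linarith
    have hrle : η ^ ((n : ℕ) : ℝ) ≤ η ^ (t / T - 1) :=
      Real.rpow_le_rpow_of_exponent_ge hη0 hη1.le hexp
    rw [Real.rpow_natCast] at hrle
    calc kuratowski (S t '' 𝓑₀) ≤ η ^ n * kuratowski 𝓑₀ := hmain
      _ ≤ η ^ (t / T - 1) * kuratowski 𝓑₀ :=
        mul_le_mul_of_nonneg_right hrle (kuratowski_nonneg _)
end

section
/- Let {S(t)}_{t≥0} be a dissipative semigroup on a complete metric space (X,d) with positively invariant bounded absorbing set 𝓑₀. Assume there exist T > 0, η ∈ [0,1), a function g: (ℝ⁺)^m → ℝ⁺ nondecreasing in each variable, vanishing and continuous at the origin, a function φ: X × X → ℝ⁺ such that every sequence {yₙ} ⊆ 𝓑₀ has a subsequence {y_{n_k}} with lim_{k→∞} lim_{l→∞} φ(y_{n_k}, y_{n_l}) = 0, and pseudometrics ϱ₁,…,ϱ_m precompact on 𝓑₀, satisfying d(S(T)y₁,S(T)y₂) ≤ η d(y₁,y₂) + g(ϱ₁(y₁,y₂),…,ϱ_m(y₁,y₂)) +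 φ(y₁,y₂) for all y₁,y₂ ∈ 𝓑₀. Then α(S(t)𝓑₀) ≤ 2η^{t/T − 1}α(𝓑₀) for all t ≥ T. -/
open Set Metric Filter

namespace StmtAux

/-- separation predicate -/
def SepSeq {X : Type*} [MetricSpace X] (B : Set X) (r : ℝ) : Prop :=
  ∃ f : ℕ → X, (∀ n, f n ∈ B) ∧ ∀ i j : ℕ, i < j → r ≤ dist (f i) (f j)

open Classical in
noncomputable def nextS (P : ℕ → ℕ → Prop) (S : Set ℕ) : Set ℕ :=
  if ({x ∈ S | sInf S < x ∧ P (sInf S) x}).Infinite then {x ∈ S | sInf S < x ∧ P (sInf S) x}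
  else {x ∈ S | sInf S < x ∧ ¬ P (sInf S) x}

lemma nextS_subset (P : ℕ → ℕ → Prop) (S : Set ℕ) : nextS P S ⊆ S := by
  unfold nextS; split_ifs <;> exact fun x hx => hx.1

lemma nextS_lt (P : ℕ → ℕ → Prop) (S : Set ℕ) {x : ℕ} (hx : x ∈ nextS P S) : sInf S < x := by
  unfold nextS at hx; split_ifs at hx <;> exact hx.2.1

lemma nextS_infinite (P : ℕ → ℕ → Prop) {S : Set ℕ} (hS : S.Infinite) :
    (nextS P S).Infinite := by
  classical
  have h1 : ({x ∈ S | sInf S < x}).Infinite := by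
    have he : {x ∈ S | sInf S < x} = S \ (Set.Iic (sInf S)) := by
      ext x; simp [not_le]
    rw [he]; exact hS.diff (Set.finite_Iic _)
  have h2 : {x ∈ S | sInf S < x ∧ P (sInf S) x} ∪ {x ∈ S | sInf S < x ∧ ¬ P (sInf S) x}
      = {x ∈ S | sInf S < x} := by
    ext x; by_cases h : P (sInf S) x <;> simp [h] <;> tauto
  rw [← h2] at h1
  unfold nextS
  rcases Set.infinite_union.mp h1 with h | h
  · rw [if_pos h]; exact h
  · split_ifs with h' 
    · exact h'
    · exact h

theorem ramsey2 (P : ℕ → ℕ → Prop) :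
    ∃ k : ℕ → ℕ, StrictMono k ∧
      ((∀ i j, i < j → P (k i) (k j)) ∨ (∀ i j, i < j → ¬ P (k i) (k j))) := by
  classical
  let Sq : ℕ → Set ℕ := fun n => Nat.rec Set.univ (fun _ S => nextS P S) n
  have hSqs : ∀ n, Sq (n + 1) = nextS P (Sq n) := fun n => rfl
  have hinf : ∀ n, (Sq n).Infinite := by
    intro n; induction n with
    | zero => exact Set.infinite_univ
    | succ n ih => rw [hSqs]; exact nextS_infinite P ih
  let a : ℕ → ℕ := fun n => sInf (Sq n)
  have hmem : ∀ n, a n ∈ Sq n := fun n => Nat.sInf_mem (hinf n).nonempty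
  have hanti : Antitone Sq := antitone_nat_of_succ_le (fun n => by
    rw [hSqs]; exact nextS_subset P (Sq n))
  have hlt : ∀ n x, x ∈ Sq (n + 1) → a n < x := fun n x hx =>
    nextS_lt P (Sq n) (by rwa [hSqs] at hx)
  have ha : StrictMono a := strictMono_nat_of_lt_succ (fun n => hlt n _ (hmem (n + 1)))
  let c : ℕ → Prop := fun n => ({x ∈ Sq n | a n < x ∧ P (a n) x}).Infinite
  have hcolor : ∀ n x, x ∈ Sq (n + 1) → ((c n → P (a n) x) ∧ (¬ c n → ¬ P (a n) x)) := by
    intro n x hx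
    rw [hSqs] at hx
    unfold nextS at hx
    split_ifs at hx with h
    · exact ⟨fun _ => hx.2.2, fun hc => absurd h hc⟩
    · exact ⟨fun hc => absurd hc h, fun _ => hx.2.2⟩
  have hdich : {n | c n}.Infinite ∨ {n | ¬ c n}.Infinite := by
    rw [← Set.infinite_union]
    have : {n | c n} ∪ {n | ¬ c n} = Set.univ := by
      ext n; by_cases h : c n <;> simp [h]
    rw [this]; exact Set.infinite_univ
  have key : ∀ i j : ℕ, i < j → ((c i → P (a i) (a j)) ∧ (¬ c i → ¬ P (a i) (a j))) := by
    intro i j hij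
    exact hcolor i (a j) (hanti hij (hmem j))
  rcases hdich with h | h
  · refine ⟨a ∘ Nat.nth c, ha.comp (Nat.nth_strictMono h), Or.inl ?_⟩
    intro i j hij
    exact (key _ _ (Nat.nth_strictMono h hij)).1 (Nat.nth_mem_of_infinite h i)
  · refine ⟨a ∘ Nat.nth (fun n => ¬ c n), ha.comp (Nat.nth_strictMono h), Or.inr ?_⟩
    intro i j hij
    exact (key _ _ (Nat.nth_strictMono h hij)).2 (Nat.nth_mem_of_infinite h i)

variable {X : Type*} [MetricSpace X]

lemma covset_bddBelow (B : Set X) :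
    BddBelow {δ : ℝ | 0 < δ ∧ ∃ 𝓒 : Finset (Set X), (B ⊆ ⋃ s ∈ 𝓒, s) ∧
      ∀ s ∈ 𝓒, Metric.diam s < δ} := ⟨0, fun _ hx => hx.1.le⟩

lemma kuratowski_nonneg (B : Set X) : 0 ≤ kuratowski B :=
  Real.sInf_nonneg (fun _ hx => hx.1.le)

lemma sep_lt_cover {B : Set X} {r δ : ℝ} {𝓒 : Finset (Set X)}
    (hcov : B ⊆ ⋃ s ∈ 𝓒, s) (hdiam : ∀ s ∈ 𝓒, Metric.diam s < δ)
    (hbdd : ∀ s : Set X, Bornology.IsBounded s)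
    (hsep : SepSeq B r) : r < δ := by
  obtain ⟨f, hf, hfs⟩ := hsep
  have hex : ∀ n : ℕ, ∃ s : Set X, s ∈ 𝓒 ∧ f n ∈ s := by
    intro n
    have := hcov (hf n)
    simpa using this
  choose s hs hfm using hex
  have : ∃ i j : ℕ, i ≠ j ∧ (fun n => (⟨s n, hs n⟩ : {t // t ∈ 𝓒})) i
      = (fun n => (⟨s n, hs n⟩ : {t // t ∈ 𝓒})) j :=
    Finite.exists_ne_map_eq_of_infinite _
  obtain ⟨i, j, hne, heq⟩ := this
  have hseq : s i = s j := congrArg Subtype.val heq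
  rcases hne.lt_or_gt with h | h
  · calc r ≤ dist (f i) (f j) := hfs i j h
      _ ≤ Metric.diam (s i) := Metric.dist_le_diam_of_mem (hbdd _) (hfm i) (hseq ▸ hfm j)
      _ < δ := hdiam _ (hs i)
  · calc r ≤ dist (f j) (f i) := hfs j i h
      _ ≤ Metric.diam (s i) := Metric.dist_le_diam_of_mem (hbdd _) (hseq ▸ hfm j) (hfm i)
      _ < δ := hdiam _ (hs i)

lemma cover_balls {B : Set X} {r : ℝ} (h : ¬ SepSeq B r) :
    ∃ F : Finset X, B ⊆ ⋃ x ∈ F, Metric.ball x r := by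
  classical
  by_contra hc
  push_neg at hc
  have hstep : ∀ F : Finset X, ∃ x, x ∈ B ∧ ∀ y ∈ F, r ≤ dist x y := by
    intro F
    obtain ⟨x, hxB, hx⟩ := Set.not_subset.mp (hc F)
    refine ⟨x, hxB, fun y hy => ?_⟩
    by_contra hlt
    push_neg at hlt
    exact hx (Set.mem_biUnion hy (Metric.mem_ball.mpr hlt))
  choose c hcB hcd using hstep
  let F : ℕ → Finset X := fun n => Nat.rec ∅ (fun _ Fn => insert (c Fn) Fn) n
  have hFs : ∀ n, F (n + 1) = insert (c (F n)) (F n) := fun _ => rfl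
  have hmono : Monotone F := monotone_nat_of_le_succ (fun n => by
    rw [hFs]; exact Finset.subset_insert _ _)
  refine h ⟨fun n => c (F n), fun n => hcB _, fun i j hij => ?_⟩
  have hmem : c (F i) ∈ F j := by
    have h1 : c (F i) ∈ F (i + 1) := by rw [hFs]; exact Finset.mem_insert_self _ _
    exact hmono hij h1
  rw [dist_comm]
  exact hcd (F j) _ hmem

lemma le_add_eps {a b : ℝ} (h : ∀ ε : ℝ, 0 < ε → a ≤ b + ε) : a ≤ b := by
  by_contra hc
  push_neg at hc
  have := h ((a - b) / 2) (by linarith)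
  linarith

lemma kuratowski_le_of_not_sep {B : Set X} {r : ℝ} (hr : 0 < r) (h : ¬ SepSeq B r) :
    kuratowski B ≤ 2 * r := by
  classical
  obtain ⟨F, hF⟩ := cover_balls h
  refine le_add_eps (fun ε hε => ?_)
  refine csInf_le (covset_bddBelow B) ⟨by linarith, F.image (fun x => Metric.ball x r), ?_, ?_⟩
  · intro x hx
    obtain ⟨y, hy, hxy⟩ := Set.mem_iUnion₂.mp (hF hx)
    exact Set.mem_biUnion (Finset.mem_image_of_mem _ hy) hxy
  · intro s hs
    obtain ⟨x, _, rfl⟩ := Finset.mem_image.mp hs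
    calc Metric.diam (Metric.ball x r) ≤ 2 * r := Metric.diam_ball hr.le
      _ < 2 * r + ε := by linarith

end StmtAux
theorem stmt_11 {X : Type*} [MetricSpace X] [CompleteSpace X] {m : ℕ}
    (S : ℝ → X → X)
    (hcont : ∀ t, 0 ≤ t → Continuous (S t))
    (hS0 : ∀ x, S 0 x = x)
    (hSadd : ∀ s t : ℝ, 0 ≤ s → 0 ≤ t → ∀ x, S (s + t) x = S s (S t x))
    (𝓑₀ : Set X) (hBbdd : Bornology.IsBounded 𝓑₀)
    (hBinv : ∀ t : ℝ, 0 ≤ t → S t '' 𝓑₀ ⊆ 𝓑₀)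
    (habs : ∀ B : Set X, Bornology.IsBounded B → ∃ tB : ℝ, 0 ≤ tB ∧
      ∀ t : ℝ, tB ≤ t → S t '' B ⊆ 𝓑₀)
    (T : ℝ) (hT : 0 < T)
    (η : ℝ) (hη : 0 ≤ η) (hη1 : η < 1)
    (g : (Fin m → ℝ) → ℝ) (hgpos : ∀ v, 0 ≤ g v)
    (hgmono : ∀ v w : Fin m → ℝ, (∀ i, v i ≤ w i) → g v ≤ g w)
    (hg0 : g 0 = 0) (hgcont : ContinuousAt g 0)
    (φ : X → X → ℝ) (hφpos : ∀ x y, 0 ≤ φ x y)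
    (hφsub : ∀ y : ℕ → X, (∀ n, y n ∈ 𝓑₀) →
      ∃ k : ℕ → ℕ, StrictMono k ∧ ∃ L : ℕ → ℝ,
        (∀ p : ℕ, Tendsto (fun l => φ (y (k p)) (y (k l))) atTop (nhds (L p))) ∧
        Tendsto L atTop (nhds 0))
    (ϱ : Fin m → X → X → ℝ)
    (hϱpos : ∀ i x y, 0 ≤ ϱ i x y)
    (hϱsymm : ∀ i x y, ϱ i x y = ϱ i y x)
    (hϱdiag : ∀ i x, ϱ i x x = 0)
    (hϱtri : ∀ i x y z, ϱ i x z ≤ ϱ i x y + ϱ i y z)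
    (hϱpre : ∀ i, ∀ y : ℕ → X, (∀ n, y n ∈ 𝓑₀) →
      ∃ k : ℕ → ℕ, StrictMono k ∧
        ∀ ε : ℝ, 0 < ε → ∃ N : ℕ, ∀ p q : ℕ, N ≤ p → N ≤ q → ϱ i (y (k p)) (y (k q)) ≤ ε)
    (hquasi : ∀ y₁ ∈ 𝓑₀, ∀ y₂ ∈ 𝓑₀,
      dist (S T y₁) (S T y₂) ≤ η * dist y₁ y₂ + g (fun i => ϱ i y₁ y₂) + φ y₁ y₂) :
    ∀ t : ℝ, T ≤ t → kuratowski (S t '' 𝓑₀) ≤ 2 * η ^ (t / T - 1) * kuratowski 𝓑₀ := by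
  classical
  intro t ht
  by_cases hXb : Bornology.IsBounded (Set.univ : Set X)
  swap
  · -- X unbounded : everything has kuratowski 0 via the cover {univ}
    have hzero : ∀ B : Set X, kuratowski B = 0 := by
      intro B
      have hmem : ∀ δ : ℝ, 0 < δ → δ ∈ {δ : ℝ | 0 < δ ∧ ∃ 𝓒 : Finset (Set X),
          (B ⊆ ⋃ s ∈ 𝓒, s) ∧ ∀ s ∈ 𝓒, Metric.diam s < δ} := by
        intro δ hδ
        refine ⟨hδ, {Set.univ}, ?_, ?_⟩
        · intro x _; simp
        · intro s hs
          rw [Finset.mem_singleton] at hs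
          subst hs
          rw [Metric.diam_eq_zero_of_unbounded hXb]
          exact hδ
      refine le_antisymm (StmtAux.le_add_eps fun ε hε => ?_) (StmtAux.kuratowski_nonneg B)
      have := csInf_le (StmtAux.covset_bddBelow B) (hmem ε hε)
      rw [zero_add]; exact this
    rw [hzero, hzero, mul_zero]
  -- X bounded: every subset is bounded
  have hbs : ∀ s : Set X, Bornology.IsBounded s := fun s => hXb.subset (Set.subset_univ s)
  have hne : ∀ B : Set X, Set.Nonempty {δ : ℝ | 0 < δ ∧ ∃ 𝓒 : Finset (Set X),
      (B ⊆ ⋃ s ∈ 𝓒, s) ∧ ∀ s ∈ 𝓒, Metric.diam s < δ} := by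
    intro B
    refine ⟨Metric.diam (Set.univ : Set X) + 1, ?_, {Set.univ}, ?_, ?_⟩
    · have := Metric.diam_nonneg (s := (Set.univ : Set X)); linarith
    · intro x _; simp
    · intro s hs
      rw [Finset.mem_singleton] at hs
      subst hs
      linarith
  set α₀ := kuratowski 𝓑₀ with hα₀def
  have hα₀ : 0 ≤ α₀ := StmtAux.kuratowski_nonneg 𝓑₀
  -- pseudometric Cauchy extraction for all i simultaneously
  have rho_sub : ∀ y : ℕ → X, (∀ n, y n ∈ 𝓑₀) → ∃ k : ℕ → ℕ, StrictMono k ∧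
      ∀ i : Fin m, ∀ ε : ℝ, 0 < ε → ∃ N, ∀ p q, N ≤ p → N ≤ q →
        ϱ i (y (k p)) (y (k q)) ≤ ε := by
    have aux : ∀ n : ℕ, ∀ y : ℕ → X, (∀ j, y j ∈ 𝓑₀) → ∃ k : ℕ → ℕ, StrictMono k ∧
        ∀ i : Fin m, (i : ℕ) < n → ∀ ε : ℝ, 0 < ε → ∃ N, ∀ p q, N ≤ p → N ≤ q →
          ϱ i (y (k p)) (y (k q)) ≤ ε := by
      intro n
      induction n with
      | zero => exact fun y _ => ⟨id, strictMono_id, fun i hi => absurd hi (Nat.not_lt_zero _)⟩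
      | succ n ih =>
        intro y hy
        obtain ⟨k, hk, hkp⟩ := ih y hy
        by_cases hnm : n < m
        · obtain ⟨k', hk', hc⟩ := hϱpre ⟨n, hnm⟩ (y ∘ k) (fun j => hy _)
          refine ⟨k ∘ k', hk.comp hk', ?_⟩
          intro i hi ε hε
          rcases Nat.lt_succ_iff_lt_or_eq.mp hi with h | h
          · obtain ⟨N, hN⟩ := hkp i h ε hε
            exact ⟨N, fun p q hp hq => hN _ _ (hp.trans hk'.le_apply) (hq.trans hk'.le_apply)⟩
          · obtain ⟨N, hN⟩ := hc ε hε
            have hieq : i = ⟨n, hnm⟩ := Fin.ext h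
            exact ⟨N, fun p q hp hq => by rw [hieq]; exact hN p q hp hq⟩
        · exact ⟨k, hk, fun i _ ε hε => hkp i (lt_of_lt_of_le i.isLt (le_of_not_gt hnm)) ε hε⟩
    exact fun y hy => (aux m y hy).imp (fun k hk =>
      ⟨hk.1, fun i ε hε => hk.2 i i.isLt ε hε⟩)
  -- the key one-step contraction for SepSeq
  have step : ∀ A : Set X, A ⊆ 𝓑₀ → ∀ r' r : ℝ, ¬ StmtAux.SepSeq A r' → η * r' < r →
      ¬ StmtAux.SepSeq (S T '' A) r := by
    intro A hA r' r hr' hlt hsep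
    obtain ⟨z, hz, hzsep⟩ := hsep
    have hz' : ∀ n, ∃ x, x ∈ A ∧ S T x = z n := by
      intro n; simpa [Set.mem_image] using hz n
    choose y hyA hyz using hz'
    obtain ⟨k₀, hk₀, hdich⟩ := StmtAux.ramsey2 (fun a b => dist (y a) (y b) < r')
    rcases hdich with hgood | hbad
    swap
    · exact hr' ⟨y ∘ k₀, fun n => hyA _, fun i j hij => le_of_not_gt (hbad i j hij)⟩
    have hw : ∀ n, (y ∘ k₀) n ∈ 𝓑₀ := fun n => hA (hyA _)
    obtain ⟨k₁, hk₁, hrho⟩ := rho_sub (y ∘ k₀) hw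
    obtain ⟨k₂, hk₂, L, hL1, hL2⟩ := hφsub ((y ∘ k₀) ∘ k₁) (fun n => hw _)
    set v : ℕ → X := fun n => y (k₀ (k₁ (k₂ n))) with hvdef
    have hvB : ∀ n, v n ∈ 𝓑₀ := fun n => hw _
    have hvpairs : ∀ p q, p < q → dist (v p) (v q) < r' := fun p q h =>
      hgood _ _ (hk₁ (hk₂ h))
    set ε := (r - η * r') / 3 with hεdef
    have hε : 0 < ε := by rw [hεdef]; linarith
    obtain ⟨δ, hδ, hgδ⟩ := Metric.continuousAt_iff.mp hgcont ε hε
    have hNi : ∀ i : Fin m, ∃ N, ∀ p q, N ≤ p → N ≤ q → ϱ i (v p) (v q) ≤ δ / 2 := by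
      intro i
      obtain ⟨N, hN⟩ := hrho i (δ / 2) (by positivity)
      exact ⟨N, fun p q hp hq => hN _ _ (hp.trans hk₂.le_apply) (hq.trans hk₂.le_apply)⟩
    choose Ni hNiprop using hNi
    set N := Finset.univ.sup Ni with hNdef
    have hNle : ∀ i : Fin m, Ni i ≤ N := fun i => Finset.le_sup (Finset.mem_univ i)
    have hLev : ∀ᶠ p in atTop, L p < ε := hL2.eventually (gt_mem_nhds hε)
    obtain ⟨p₀, hp₀L, hp₀N⟩ := (hLev.and (eventually_ge_atTop N)).exists
    have hφev : ∀ᶠ l in atTop, φ (v p₀) (v l) < ε := by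
      have := (hL1 p₀).eventually (gt_mem_nhds hp₀L)
      simpa using this
    obtain ⟨l₀, hl₀φ, hl₀N, hl₀p⟩ :=
      (hφev.and ((eventually_ge_atTop N).and (eventually_gt_atTop p₀))).exists
    obtain ⟨hl₀N, hl₀p⟩ := And.intro hl₀N hl₀p
    have hd : dist (v p₀) (v l₀) < r' := hvpairs _ _ hl₀p
    have hϱb : ∀ i, ϱ i (v p₀) (v l₀) ≤ δ / 2 := fun i =>
      hNiprop i _ _ ((hNle i).trans hp₀N) ((hNle i).trans hl₀N)
    have hgsmall : g (fun i => ϱ i (v p₀) (v l₀)) < ε := by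
      have hdist : dist (fun i => ϱ i (v p₀) (v l₀)) (0 : Fin m → ℝ) < δ := by
        rcases Nat.eq_zero_or_pos m with hm | hm
        · have : dist (fun i => ϱ i (v p₀) (v l₀)) (0 : Fin m → ℝ) = 0 := by
            subst hm
            simp [dist_pi_def]
          rw [this]; exact hδ
        · rw [dist_pi_lt_iff hδ]
          intro i
          simp only [Real.dist_eq, Pi.zero_apply, sub_zero]
          rw [abs_of_nonneg (hϱpos i _ _)]
          have := hϱb i
          linarith
      have := hgδ hdist
      rw [hg0] at this
      rwa [Real.dist_eq, sub_zero, abs_of_nonneg (hgpos _)] at this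
    have hqb := hquasi (v p₀) (hvB _) (v l₀) (hvB _)
    have hsepz : r ≤ dist (z (k₀ (k₁ (k₂ p₀)))) (z (k₀ (k₁ (k₂ l₀)))) :=
      hzsep _ _ (hk₀ (hk₁ (hk₂ hl₀p)))
    rw [← hyz (k₀ (k₁ (k₂ p₀))), ← hyz (k₀ (k₁ (k₂ l₀)))] at hsepz
    have hmul : η * dist (v p₀) (v l₀) ≤ η * r' := mul_le_mul_of_nonneg_left hd.le hη
    have : dist (S T (v p₀)) (S T (v l₀)) < r := by
      calc dist (S T (v p₀)) (S T (v l₀))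
          ≤ η * dist (v p₀) (v l₀) + g (fun i => ϱ i (v p₀) (v l₀)) + φ (v p₀) (v l₀) := hqb
        _ < η * r' + ε + ε := by linarith
        _ < r := by rw [hεdef]; linarith
    have hv1 : S T (v p₀) = z (k₀ (k₁ (k₂ p₀))) := hyz _
    have hv2 : S T (v l₀) = z (k₀ (k₁ (k₂ l₀))) := hyz _
    rw [hv1, hv2] at this
    rw [hyz, hyz] at hsepz
    linarith
  -- main induction on the number of whole periods
  have key : ∀ n : ℕ, ∀ r : ℝ, η ^ n * α₀ < r → ¬ StmtAux.SepSeq (S ((n : ℝ) * T) '' 𝓑₀) r := by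
    intro n
    induction n with
    | zero =>
      intro r hr hsep
      have him : S ((0 : ℕ) * T) '' 𝓑₀ = 𝓑₀ := by
        have : ((0 : ℕ) : ℝ) * T = 0 := by norm_num
        rw [this]
        ext x
        simp [hS0]
      rw [him] at hsep
      rw [pow_zero, one_mul] at hr
      obtain ⟨δ, hδmem, hδlt⟩ := exists_lt_of_csInf_lt (hne 𝓑₀) hr
      obtain ⟨hδpos, 𝓒, hcov, hdiam⟩ := hδmem
      have := StmtAux.sep_lt_cover hcov hdiam hbs hsep
      linarith
    | succ n ih =>
      intro r hr
      have hr0 : 0 < r := lt_of_le_of_lt (by positivity) hr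
      obtain ⟨r', hr'1, hr'2⟩ : ∃ r', η ^ n * α₀ < r' ∧ η * r' < r := by
        rcases eq_or_lt_of_le hη with h0 | hpos
        · refine ⟨η ^ n * α₀ + 1, by linarith, ?_⟩
          rw [← h0, zero_mul]
          exact hr0
        · have hdiv : η ^ n * α₀ < r / η := by
            rw [lt_div_iff₀ hpos]
            calc η ^ n * α₀ * η = η ^ (n + 1) * α₀ := by ring
              _ < r := hr
          obtain ⟨r', h1, h2⟩ := exists_between hdiv
          refine ⟨r', h1, ?_⟩
          have := mul_lt_mul_of_pos_left h2 hpos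
          rwa [mul_div_cancel₀ r (ne_of_gt hpos)] at this
      have hA : S ((n : ℝ) * T) '' 𝓑₀ ⊆ 𝓑₀ := hBinv _ (by positivity)
      have him : S (((n + 1 : ℕ) : ℝ) * T) '' 𝓑₀ = S T '' (S ((n : ℝ) * T) '' 𝓑₀) := by
        rw [Set.image_image]
        apply Set.image_congr'
        intro x
        have hcast : ((n + 1 : ℕ) : ℝ) * T = T + (n : ℝ) * T := by push_cast; ring
        rw [hcast, hSadd T ((n : ℝ) * T) hT.le (by positivity)]
      rw [him]
      exact step _ hA r' r (ih r' hr'1) hr'2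
  -- assemble
  set n : ℕ := ⌊t / T⌋₊ with hndef
  have htT : (1 : ℝ) ≤ t / T := (one_le_div hT).mpr ht
  have hn1 : 1 ≤ n := Nat.le_floor (by exact_mod_cast htT)
  have hnle : (n : ℝ) ≤ t / T := Nat.floor_le (by linarith)
  have hlt2 : t / T < n + 1 := Nat.lt_floor_add_one _
  have hnT : (n : ℝ) * T ≤ t := by
    have := (le_div_iff₀ hT).mp hnle
    linarith [this]
  have hsub : S t '' 𝓑₀ ⊆ S ((n : ℝ) * T) '' 𝓑₀ := by
    rintro x ⟨b, hb, rfl⟩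
    have heq : S t b = S ((n : ℝ) * T) (S (t - (n : ℝ) * T) b) := by
      rw [← hSadd _ _ (by positivity) (by linarith)]
      congr 1
      ring
    rw [heq]
    exact Set.mem_image_of_mem _ (hBinv _ (by linarith) (Set.mem_image_of_mem _ hb))
  have hmono : kuratowski (S t '' 𝓑₀) ≤ kuratowski (S ((n : ℝ) * T) '' 𝓑₀) := by
    apply csInf_le_csInf (StmtAux.covset_bddBelow _) (hne _)
    rintro δ ⟨hδ, 𝓒, hcov, hdiam⟩
    exact ⟨hδ, 𝓒, hsub.trans hcov, hdiam⟩
  have hboundn : kuratowski (S ((n : ℝ) * T) '' 𝓑₀) ≤ 2 * (η ^ n * α₀) := by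
    refine StmtAux.le_add_eps (fun ε hε => ?_)
    have h1 : η ^ n * α₀ < η ^ n * α₀ + ε / 2 := by linarith
    have h2 := key n _ h1
    have h3 := StmtAux.kuratowski_le_of_not_sep
      (show (0 : ℝ) < η ^ n * α₀ + ε / 2 by positivity) h2
    linarith
  have hfinal : 2 * (η ^ n * α₀) ≤ 2 * η ^ (t / T - 1) * α₀ := by
    rcases eq_or_lt_of_le hη with h0 | hpos
    · have hz : η ^ n = 0 := by
        rw [← h0]
        exact zero_pow (by omega)
      rw [hz]
      have := Real.rpow_nonneg hη (t / T - 1)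
      nlinarith
    · have hexp : η ^ ((t / T - 1) : ℝ) ≥ η ^ ((n : ℕ) : ℝ) :=
        Real.rpow_le_rpow_of_exponent_ge hpos hη1.le (by linarith)
      rw [Real.rpow_natCast] at hexp
      nlinarith
  calc kuratowski (S t '' 𝓑₀) ≤ kuratowski (S ((n : ℝ) * T) '' 𝓑₀) := hmono
    _ ≤ 2 * (η ^ n * α₀) := hboundn
    _ ≤ 2 * η ^ (t / T - 1) * α₀ := hfinal
end

section
/- Let {S(t)} be a semigroup on a complete metric space, B a bounded set, n a natural number, T > 0, and suppose that for every sequence {y_p} ⊆ B, liminf_{p→∞} liminf_{q→∞} d(S(nT)y_p, S(nT)y_q) ≤ c for some constant c ≥ 0. Then α(S(nT)B) ≤ 2c. -/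
open Set Metric Filter

theorem stmt_12 {X : Type*} [MetricSpace X] [CompleteSpace X]
    (S : ℝ → X → X)
    (hcont : ∀ t, 0 ≤ t → Continuous (S t))
    (hS0 : ∀ x, S 0 x = x)
    (hSadd : ∀ s t : ℝ, 0 ≤ s → 0 ≤ t → ∀ x, S (s + t) x = S s (S t x))
    (B : Set X) (hBbdd : Bornology.IsBounded B)
    (n : ℕ) (T : ℝ) (hT : 0 < T) (c : ℝ) (hc : 0 ≤ c)
    (hlim : ∀ y : ℕ → X, (∀ p, y p ∈ B) →
      Filter.liminf (fun p =>
        Filter.liminf (fun q => dist (S (n * T) (y p)) (S (n * T) (y q))) atTop) atTop ≤ c) :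
    kuratowski (S (n * T) '' B) ≤ 2 * c := by
  classical
  set E := S (n * T) '' B with hEdef
  refine le_of_forall_pos_le_add fun ε hε => ?_
  have hδpos : (0:ℝ) < 2 * c + ε := by positivity
  have bdd : BddBelow {δ : ℝ | 0 < δ ∧ ∃ 𝓒 : Finset (Set X),
      (E ⊆ ⋃ s ∈ 𝓒, s) ∧ ∀ s ∈ 𝓒, Metric.diam s < δ} :=
    ⟨0, fun δ hδ => le_of_lt hδ.1⟩
  by_cases hEb : Bornology.IsBounded E
  · set r := c + ε / 3 with hrdef
    have hrpos : 0 < r := by positivity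
    by_cases hcov : ∃ F : Finset X, E ⊆ ⋃ x ∈ F, closedBall x r
    · obtain ⟨F, hF⟩ := hcov
      apply csInf_le bdd
      refine ⟨hδpos, F.image (fun x => closedBall x r), ?_, ?_⟩
      · intro z hz
        obtain ⟨x, hxF, hx⟩ := Set.mem_iUnion₂.mp (hF hz)
        exact Set.mem_iUnion₂.mpr ⟨closedBall x r, Finset.mem_image_of_mem _ hxF, hx⟩
      · intro s hs
        obtain ⟨x, -, rfl⟩ := Finset.mem_image.mp hs
        calc Metric.diam (closedBall x r) ≤ 2 * r := diam_closedBall hrpos.le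
          _ < 2 * c + ε := by rw [hrdef]; linarith
    · exfalso
      push_neg at hcov
      have hne : ∀ F : Finset X, (E \ ⋃ x ∈ F, closedBall x r).Nonempty := by
        intro F
        rw [Set.nonempty_iff_ne_empty]
        intro hemp
        exact hcov F (fun z hz => by
          by_contra hz2
          exact (Set.eq_empty_iff_forall_notMem.mp hemp z) ⟨hz, hz2⟩)
      choose f hf using hne
      let G : ℕ → Finset X := fun k => Nat.rec ∅ (fun _ Fk => insert (f Fk) Fk) k
      let x : ℕ → X := fun k => f (G k)
      have hxE : ∀ k, x k ∈ E := fun k => (hf (G k)).1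
      have hGsucc : ∀ k, G (k + 1) = insert (x k) (G k) := fun k => rfl
      have hmem : ∀ i k, i < k → x i ∈ G k := by
        intro i k hik
        induction k with
        | zero => omega
        | succ k ih =>
          rw [hGsucc]
          rcases Nat.lt_succ_iff_lt_or_eq.mp hik with h | h
          · exact Finset.mem_insert_of_mem (ih h)
          · subst h; exact Finset.mem_insert_self _ _
      have hdist : ∀ i k, i < k → r < dist (x k) (x i) := by
        intro i k hik
        by_contra hle
        push_neg at hle
        exact (hf (G k)).2 (Set.mem_biUnion (hmem i k hik) (mem_closedBall.mpr hle))
      have hdist' : ∀ p q, p ≠ q → r < dist (x p) (x q) := by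
        intro p q hpq
        rcases lt_or_gt_of_ne hpq with h | h
        · rw [dist_comm]; exact hdist p q h
        · exact hdist q p h
      choose y hyB hyx using hxE
      have key := hlim y hyB
      simp only [hyx] at key
      have hD : ∀ p q, dist (x p) (x q) ≤ Metric.diam E :=
        fun p q => Metric.dist_le_diam_of_mem hEb ((hf (G p)).1) ((hf (G q)).1)
      have hinner : ∀ p, r ≤ liminf (fun q => dist (x p) (x q)) atTop := by
        intro p
        apply le_liminf_of_le
        · exact isCoboundedUnder_ge_of_le atTop (fun q => hD p q)
        · filter_upwards [eventually_gt_atTop p] with q hq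
          exact (hdist' p q hq.ne).le
      have hinnerD : ∀ p, liminf (fun q => dist (x p) (x q)) atTop ≤ Metric.diam E := by
        intro p
        apply liminf_le_of_frequently_le
        · exact Frequently.of_forall (fun q => hD p q)
        · exact isBoundedUnder_of ⟨0, fun q => dist_nonneg⟩
      have houter : r ≤ liminf (fun p =>
          liminf (fun q => dist (x p) (x q)) atTop) atTop := by
        apply le_liminf_of_le
        · exact isCoboundedUnder_ge_of_le atTop hinnerD
        · exact Eventually.of_forall hinner
      have : r ≤ c := le_trans houter key
      rw [hrdef] at this; linarith
  · apply csInf_le bdd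
    refine ⟨hδpos, {E}, ?_, ?_⟩
    · intro z hz
      exact Set.mem_iUnion₂.mpr ⟨E, Finset.mem_singleton_self E, hz⟩
    · intro s hs
      rw [Finset.mem_singleton] at hs
      subst hs
      rw [Metric.diam_eq_zero_of_unbounded hEb]
      exact hδpos
end

section
/- For p > 0 and a Hilbert space H with norm ‖·‖, there exists a constant C_p > 0 such that for all w, v ∈ H: ⟨‖w‖^p w − ‖v‖^p v, w − v⟩ ≥ C_p ‖w − v‖^{p+2}. -/
theorem stmt_17 {H : Type*} [NormedAddCommGroup H] [InnerProductSpace ℝ H]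
    (p : ℝ) (hp : 0 < p) :
    ∃ C : ℝ, 0 < C ∧ ∀ w v : H,
      C * ‖w - v‖ ^ (p + 2) ≤
        (inner ℝ ((‖w‖ ^ p) • w - (‖v‖ ^ p) • v) (w - v) : ℝ) := by
  refine ⟨(2:ℝ) ^ (-(p+1)), Real.rpow_pos_of_pos two_pos _, fun w v => ?_⟩
  set a := ‖w‖ with ha
  set b := ‖v‖ with hb
  set d := ‖w - v‖ with hd
  have ha0 : 0 ≤ a := norm_nonneg _
  have hb0 : 0 ≤ b := norm_nonneg _
  have hd0 : 0 ≤ d := norm_nonneg _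
  have hap : 0 ≤ a ^ p := Real.rpow_nonneg ha0 p
  have hbp : 0 ≤ b ^ p := Real.rpow_nonneg hb0 p
  have hexp : (inner ℝ ((a ^ p) • w - (b ^ p) • v) (w - v) : ℝ)
      = a ^ p * a ^ 2 + b ^ p * b ^ 2 - (a ^ p + b ^ p) * inner ℝ w v := by
    simp only [inner_sub_left, inner_sub_right, real_inner_smul_left,
      real_inner_self_eq_norm_sq, real_inner_comm v w, ← ha, ← hb]
    ring
  have hnorm : d ^ 2 = a ^ 2 + b ^ 2 - 2 * inner ℝ w v := by
    rw [hd, @norm_sub_sq_real]; ring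
  have hmono : 0 ≤ (a ^ p - b ^ p) * (a ^ 2 - b ^ 2) := by
    rcases le_total a b with h | h
    · have h1 : a ^ p ≤ b ^ p := Real.rpow_le_rpow ha0 h hp.le
      have h2 : a ^ 2 ≤ b ^ 2 := by nlinarith
      nlinarith
    · have h1 : b ^ p ≤ a ^ p := Real.rpow_le_rpow hb0 h hp.le
      have h2 : b ^ 2 ≤ a ^ 2 := by nlinarith
      exact mul_nonneg (by linarith) (by linarith)
  have key : (1/2) * (a ^ p + b ^ p) * d ^ 2
      ≤ (inner ℝ ((a ^ p) • w - (b ^ p) • v) (w - v) : ℝ) := by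
    rw [hexp, hnorm]; nlinarith
  have hsum : d ^ p ≤ 2 ^ p * (a ^ p + b ^ p) := by
    have h1 : d ≤ a + b := norm_sub_le _ _
    have h2 : a + b ≤ 2 * max a b := by
      rcases le_total a b with h | h
      · rw [max_eq_right h]; linarith
      · rw [max_eq_left h]; linarith
    have h3 : d ^ p ≤ (2 * max a b) ^ p :=
      Real.rpow_le_rpow hd0 (h1.trans h2) hp.le
    have h4 : (2 * max a b) ^ p = 2 ^ p * (max a b) ^ p :=
      Real.mul_rpow (by norm_num) (le_max_of_le_left ha0)
    have h5 : (max a b) ^ p ≤ a ^ p + b ^ p := by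
      rcases le_total a b with h | h
      · rw [max_eq_right h]; linarith
      · rw [max_eq_left h]; linarith
    calc d ^ p ≤ 2 ^ p * (max a b) ^ p := by rw [← h4]; exact h3
      _ ≤ 2 ^ p * (a ^ p + b ^ p) := by
          have : (0:ℝ) ≤ (2:ℝ) ^ p := Real.rpow_nonneg (by norm_num) p
          nlinarith
  rcases eq_or_lt_of_le hd0 with h0 | h0
  · have hz : d ^ (p + 2) = 0 := by
      rw [← h0]; exact Real.zero_rpow (by linarith)
    rw [hz, mul_zero]
    have := key
    rw [← h0] at this
    nlinarith
  · have h2cast : d ^ (2:ℝ) = d ^ 2 := by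
      rw [show (2:ℝ) = ((2:ℕ):ℝ) by norm_num, Real.rpow_natCast]
    have hd2 : d ^ (p + 2) = d ^ p * d ^ 2 := by
      rw [Real.rpow_add h0, h2cast]
    have hcoef : (2:ℝ) ^ (-(p+1)) * (2:ℝ) ^ p = 1/2 := by
      rw [← Real.rpow_add two_pos, show (-(p+1) + p) = (-1 : ℝ) by ring,
        Real.rpow_neg_one]
      norm_num
    have hdp : 0 ≤ d ^ p := Real.rpow_nonneg hd0 p
    have hstep : (2:ℝ) ^ (-(p+1)) * d ^ (p + 2) ≤ (1/2) * (a ^ p + b ^ p) * d ^ 2 := by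
      rw [hd2]
      have hcp : (0:ℝ) ≤ (2:ℝ) ^ (-(p+1)) := Real.rpow_nonneg (by norm_num) _
      have : (2:ℝ) ^ (-(p+1)) * d ^ p ≤ (1/2) * (a ^ p + b ^ p) := by
        calc (2:ℝ) ^ (-(p+1)) * d ^ p
            ≤ (2:ℝ) ^ (-(p+1)) * (2 ^ p * (a ^ p + b ^ p)) := by nlinarith
          _ = (1/2) * (a ^ p + b ^ p) := by rw [← mul_assoc, hcoef]
      nlinarith [sq_nonneg d]
    exact hstep.trans key
end
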